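/- Let d be an even integer with d ≥ 2. There do not exist integers a₃, b₁, b₂, c₃, d₁, d₂ satisfying simultaneously the four congruences: d₁ + d₂ + c₃ + 2 ≡ 0 (mod d), b₁ + d₂ + a₃ + 1 ≡ 0 (mod d), b₁ + b₂ + c₃ + 1 ≡ 0 (mod d), and d₁ + b₂ + a₃ + 1 ≡ 0 (mod d). -/

import Mathlib

/-- For even `d ≥ 2`, the third group of four delta-function constraints of
the `(3,4,d)` generic Bell inequality cannot all be satisfied simultaneously. -/
theorem no_solution_third_group_four_settings
    (d : ℤ) (hd_even : Even d) (hd : 2 ≤ d) :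
    ¬ ∃ a₃ b₁ b₂ c₃ d₁ d₂ : ℤ,
        d₁ + d₂ + c₃ + 2 ≡ 0 [ZMOD d] ∧
        b₁ + d₂ + a₃ + 1 ≡ 0 [ZMOD d] ∧
        b₁ + b₂ + c₃ + 1 ≡ 0 [ZMOD d] ∧
        d₁ + b₂ + a₃ + 1 ≡ 0 [ZMOD d] := by
  rintro ⟨a₃, b₁, b₂, c₃, d₁, d₂, h1, h2, h3, h4⟩
  rw [Int.ModEq] at h1 h2 h3 h4
  have d1 : d ∣ (d₁ + d₂ + c₃ + 2) := Int.dvd_of_emod_eq_zero (by simpa using h1)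
  have d2 : d ∣ (b₁ + d₂ + a₃ + 1) := Int.dvd_of_emod_eq_zero (by simpa using h2)
  have d3 : d ∣ (b₁ + b₂ + c₃ + 1) := Int.dvd_of_emod_eq_zero (by simpa using h3)
  have d4 : d ∣ (d₁ + b₂ + a₃ + 1) := Int.dvd_of_emod_eq_zero (by simpa using h4)
  have dsum : d ∣ (2*c₃ - 2*a₃ + 1) := by
    have := (d1.add d3).sub (d2.add d4)
    rw [show (2*c₃ - 2*a₃ + 1) = (d₁ + d₂ + c₃ + 2 + (b₁ + b₂ + c₃ + 1)) - (b₁ + d₂ + a₃ + 1 + (d₁ + b₂ + a₃ + 1)) by ring]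
    exact this
  obtain ⟨m, hm⟩ := dsum
  have hev : Even (d * m) := hd_even.mul_right m
  obtain ⟨n, hn⟩ := hev
  omega
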